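/- Let G be a group, Γ ≤ G a countable subgroup, and let g ∈ G commensurate Γ, i.e. Γ ∩ gΓg^{-1} has finite index in both Γ and gΓg^{-1}. If Δ ≤ Γ is a boomerang subgroup of Γ, then gΔg^{-1} ∩ Γ is a boomerang subgroup of Γ. -/

import Mathlib

/-- The conjugation action of `γ` on subgroups: `Δ ↦ γ Δ γ⁻¹`. -/
def conjSubgroup {Γ : Type*} [Group Γ] (γ : Γ) (Δ : Subgroup Γ) : Subgroup Γ :=
  Subgroup.map (MulAut.conj γ).toMonoidHom Δ

/-- The Chabauty topology on `Subgroup Γ`: induced from the product of discrete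
topologies on `Γ → Prop` via the membership indicator. -/
def chabautyTopology (Γ : Type*) [Group Γ] : TopologicalSpace (Subgroup Γ) :=
  TopologicalSpace.induced (fun (Δ : Subgroup Γ) (g : Γ) => g ∈ Δ)
    (@Pi.topologicalSpace Γ (fun _ => Prop) (fun _ => ⊥))

/-- `γ` is a recurrent direction for `Δ`: every Chabauty-open neighbourhood `O` of `Δ`
contains `γ^n Δ γ^{-n}` for some `n ≥ 1`. -/
def IsRecurrentDirection {Γ : Type*} [Group Γ] (γ : Γ) (Δ : Subgroup Γ) : Prop :=
  ∀ O : Set (Subgroup Γ), (chabautyTopology Γ).IsOpen O → Δ ∈ O →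
    ∃ n : ℕ, 1 ≤ n ∧ conjSubgroup (γ ^ n) Δ ∈ O

/-- `Δ` is a boomerang subgroup if every `γ` is a recurrent direction for it. -/
def IsBoomerang {Γ : Type*} [Group Γ] (Δ : Subgroup Γ) : Prop :=
  ∀ γ : Γ, IsRecurrentDirection γ Δ

lemma mem_conjSubgroup {H : Type*} [Group H] (h x : H) (S : Subgroup H) :
    x ∈ conjSubgroup h S ↔ h⁻¹ * x * h ∈ S := by
  rw [conjSubgroup, Subgroup.mem_map_equiv]
  simp [mul_assoc]

/-- The map `Λ ↦ gΛg⁻¹ ∩ Γ` on subgroups of `Γ`. -/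
def phiMap {G : Type*} [Group G] (Γ : Subgroup G) (g : G) (Λ : Subgroup Γ) : Subgroup Γ :=
  (conjSubgroup g (Λ.map Γ.subtype)).comap Γ.subtype

lemma mem_phiMap {G : Type*} [Group G] (Γ : Subgroup G) (g : G) (Λ : Subgroup Γ) (x : Γ) :
    x ∈ phiMap Γ g Λ ↔ ∃ z : Γ, z ∈ Λ ∧ (z : G) = g⁻¹ * (x : G) * g := by
  simp only [phiMap, Subgroup.mem_comap, mem_conjSubgroup, Subgroup.mem_map,
    Subgroup.coe_subtype]

lemma phiMap_continuous {G : Type*} [Group G] (Γ : Subgroup G) (g : G) :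
    @Continuous _ _ (chabautyTopology Γ) (chabautyTopology Γ) (phiMap Γ g) := by
  have hι : @Continuous _ _ (chabautyTopology Γ)
      (@Pi.topologicalSpace Γ (fun _ => Prop) (fun _ => ⊥))
      (fun (Δ : Subgroup Γ) (x : Γ) => x ∈ Δ) := continuous_induced_dom
  have hcoord : ∀ x : Γ, @Continuous _ _ (chabautyTopology Γ) ⊥
      (fun Λ : Subgroup Γ => x ∈ phiMap Γ g Λ) := by
    intro x
    by_cases h : g⁻¹ * (x : G) * g ∈ Γ
    · have heq : (fun Λ : Subgroup Γ => x ∈ phiMap Γ g Λ)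
          = (fun f : Γ → Prop => f ⟨_, h⟩) ∘ (fun (Δ : Subgroup Γ) (x : Γ) => x ∈ Δ) := by
        funext Λ
        simp only [Function.comp_apply, eq_iff_iff, mem_phiMap]
        constructor
        · rintro ⟨z, hz, hzeq⟩
          have hze : z = ⟨_, h⟩ := Subtype.ext hzeq
          exact hze ▸ hz
        · intro hz
          exact ⟨⟨_, h⟩, hz, rfl⟩
      rw [heq]
      exact @Continuous.comp _ _ _ (chabautyTopology Γ)
        (@Pi.topologicalSpace Γ (fun _ => Prop) (fun _ => ⊥)) ⊥ _ _
        (@continuous_apply Γ (fun _ => Prop) (fun _ => ⊥) ⟨_, h⟩) hι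
    · have heq : (fun Λ : Subgroup Γ => x ∈ phiMap Γ g Λ) = fun _ => False := by
        funext Λ
        simp only [eq_iff_iff, mem_phiMap, iff_false, not_exists, not_and]
        intro z _ hzeq
        exact h (hzeq ▸ z.2)
      rw [heq]
      exact @continuous_const _ _ (chabautyTopology Γ) ⊥ False
  exact continuous_induced_rng.2
    (@continuous_pi _ _ _ (chabautyTopology Γ) (fun _ => ⊥) _ hcoord)

theorem boomerang_commensurator {G : Type*} [Group G] (Γ : Subgroup G) [Countable Γ]
    (g : G)
    (hc1 : (conjSubgroup g Γ).relIndex Γ ≠ 0)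
    (hc2 : Γ.relIndex (conjSubgroup g Γ) ≠ 0)
    (Δ : Subgroup Γ) (hΔ : IsBoomerang Δ) :
    IsBoomerang ((conjSubgroup g (Δ.map Γ.subtype)).comap Γ.subtype) := by
  intro γ O hO hmemO
  obtain ⟨m, hm, _, hmemm⟩ := Subgroup.exists_pow_mem_of_relIndex_ne_zero hc1 γ.2
  have hδΓ : g⁻¹ * (γ : G) ^ m * g ∈ Γ := (mem_conjSubgroup g ((γ : G) ^ m) Γ).1 hmemm.1
  set δ : Γ := ⟨g⁻¹ * (γ : G) ^ m * g, hδΓ⟩ with hδ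
  have hOpre : (chabautyTopology ↥Γ).IsOpen ((phiMap Γ g) ⁻¹' O) :=
    @Continuous.isOpen_preimage _ _ (chabautyTopology ↥Γ) (chabautyTopology ↥Γ) _
      (phiMap_continuous Γ g) O hO
  have hΔmem : Δ ∈ (phiMap Γ g) ⁻¹' O := hmemO
  obtain ⟨n, hn, hin⟩ := hΔ δ _ hOpre hΔmem
  refine ⟨m * n, Nat.one_le_iff_ne_zero.2 (by positivity), ?_⟩
  have hδn : ((δ ^ n : Γ) : G) = g⁻¹ * (γ : G) ^ (m * n) * g := by
    have h2 : (g⁻¹ * ((γ : G) ^ m) * g) ^ n = g⁻¹ * ((γ : G) ^ m) ^ n * g := by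
      have h3 := map_pow (MulAut.conj g⁻¹) ((γ : G) ^ m) n
      simpa [MulAut.conj_apply] using h3.symm
    rw [SubmonoidClass.coe_pow]
    show (g⁻¹ * (γ : G) ^ m * g) ^ n = _
    rw [h2, ← pow_mul]
  have hkey : conjSubgroup (γ ^ (m * n)) ((conjSubgroup g (Δ.map Γ.subtype)).comap Γ.subtype)
      = phiMap Γ g (conjSubgroup (δ ^ n) Δ) := by
    ext x
    rw [mem_conjSubgroup]
    show ((γ ^ (m * n))⁻¹ * x * γ ^ (m * n) ∈ phiMap Γ g Δ) ↔ x ∈ phiMap Γ g _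
    rw [mem_phiMap, mem_phiMap]
    constructor
    · rintro ⟨z, hz, hzeq⟩
      refine ⟨δ ^ n * z * (δ ^ n)⁻¹, ?_, ?_⟩
      · rw [mem_conjSubgroup]
        have hc : (δ ^ n)⁻¹ * (δ ^ n * z * (δ ^ n)⁻¹) * δ ^ n = z := by group
        rw [hc]; exact hz
      · have hco : ((δ ^ n * z * (δ ^ n)⁻¹ : Γ) : G)
            = (g⁻¹ * (γ : G) ^ (m * n) * g) * z * (g⁻¹ * (γ : G) ^ (m * n) * g)⁻¹ := by
          rw [Subgroup.coe_mul, Subgroup.coe_mul, Subgroup.coe_inv, hδn]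
        rw [hco]
        simp only [Subgroup.coe_mul, Subgroup.coe_inv, SubmonoidClass.coe_pow] at hzeq
        rw [hzeq]
        group
    · rintro ⟨w, hw, hweq⟩
      rw [mem_conjSubgroup] at hw
      refine ⟨(δ ^ n)⁻¹ * w * δ ^ n, hw, ?_⟩
      have hco : (((δ ^ n)⁻¹ * w * δ ^ n : Γ) : G)
          = (g⁻¹ * (γ : G) ^ (m * n) * g)⁻¹ * w * (g⁻¹ * (γ : G) ^ (m * n) * g) := by
        rw [Subgroup.coe_mul, Subgroup.coe_mul, Subgroup.coe_inv, hδn]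
      rw [hco, hweq]
      simp only [Subgroup.coe_mul, Subgroup.coe_inv, SubmonoidClass.coe_pow]
      group
  rw [hkey]
  exact hin
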